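/- Let (α_t)_{t≥0} be a strongly continuous semigroup of positive linear contractions on Lᵖ(m) for a σ-finite measure space (S, F, m), 1 ≤ p < ∞. For T > 0 define β_T(x) = (1/T)∫₀^T α_t(x) dt. Then for every x ∈ Lᵖ with x ≥ 0 and all a, b > 0: −(1/b)∫₀^a α_s(x) ds ≤ β_a(β_b(x)) − β_b(x) ≤ (1/b)∫_b^{b+a} α_s(x) ds, where the inequalities are pointwise almost everywhere (equivalently, in the order of Lᵖ). -/
import Mathlib

open MeasureTheory Filter Topology intervalIntegral
open scoped ENNReal

section Helpers
variable {S : Type*} [MeasurableSpace S] {m : Measure S} {p : ℝ≥0∞} [Fact (1 ≤ p)]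

omit [Fact (1 ≤ p)] in
lemma Lp_smul_nonneg' {c : ℝ} (hc : 0 ≤ c) {y : Lp ℝ p m} (hy : 0 ≤ y) : 0 ≤ c • y := by
  rw [← MeasureTheory.Lp.coeFn_nonneg] at hy ⊢
  filter_upwards [hy, Lp.coeFn_smul c y] with s hs h2
  rw [Pi.zero_apply] at hs ⊢
  rw [h2, Pi.smul_apply, smul_eq_mul]
  exact mul_nonneg hc hs

omit [Fact (1 ≤ p)] in
lemma Lp_smul_le_smul' {c : ℝ} (hc : 0 ≤ c) {y z : Lp ℝ p m} (h : y ≤ z) : c • y ≤ c • z := by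
  have := Lp_smul_nonneg' hc (sub_nonneg.2 h)
  rw [smul_sub] at this
  exact sub_nonneg.1 this

lemma Lp_integral_nonneg' {f : ℝ → Lp ℝ p m} {c d : ℝ} (hcd : c ≤ d)
    (hf : IntervalIntegrable f volume c d)
    (h : ∀ t ∈ Set.Icc c d, 0 ≤ f t) : 0 ≤ ∫ t in c..d, f t := by
  rcases eq_or_lt_of_le hcd with rfl | hlt
  · simp
  have hdc : (0:ℝ) < d - c := by linarith
  set μ := volume.restrict (Set.Ioc c d) with hμdef
  have hμu : μ Set.univ = ENNReal.ofReal (d - c) := by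
    simp [hμdef, Real.volume_Ioc]
  have h0 : ENNReal.ofReal (d - c) ≠ 0 := by
    simp [ENNReal.ofReal_eq_zero]; linarith
  set ν := (ENNReal.ofReal (d - c))⁻¹ • μ with hνdef
  haveI : IsProbabilityMeasure ν := by
    constructor
    rw [hνdef, Measure.smul_apply, hμu, smul_eq_mul,
      ENNReal.inv_mul_cancel h0 ENNReal.ofReal_ne_top]
  have hconv : Convex ℝ {y : Lp ℝ p m | 0 ≤ y} := by
    intro y hy z hz u v hu hv huv
    exact add_nonneg (Lp_smul_nonneg' hu hy) (Lp_smul_nonneg' hv hz)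
  have hclosed : IsClosed {y : Lp ℝ p m | 0 ≤ y} := isClosed_le continuous_const continuous_id
  have hmem : ∀ᵐ t ∂ν, f t ∈ {y : Lp ℝ p m | 0 ≤ y} := by
    refine Measure.ae_smul_measure ?_ _
    filter_upwards [ae_restrict_mem measurableSet_Ioc] with t ht
    exact h t ⟨le_of_lt ht.1, ht.2⟩
  have hint : Integrable f ν := (hf.1).smul_measure (by simp [h0])
  have hν : 0 ≤ ∫ t, f t ∂ν := hconv.integral_mem hclosed hmem hint
  have heq : ∫ t, f t ∂ν = ((ENNReal.ofReal (d - c))⁻¹).toReal • ∫ t, f t ∂μ :=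
    integral_smul_measure _ _
  have htr : ((ENNReal.ofReal (d - c))⁻¹).toReal = (d - c)⁻¹ := by
    rw [ENNReal.toReal_inv, ENNReal.toReal_ofReal hdc.le]
  rw [intervalIntegral.integral_of_le hcd]
  have : (0:Lp ℝ p m) ≤ (d - c) • ∫ t, f t ∂ν := Lp_smul_nonneg' hdc.le hν
  rwa [heq, htr, smul_smul, mul_inv_cancel₀ hdc.ne', one_smul] at this

lemma Lp_integral_mono' {f g : ℝ → Lp ℝ p m} {c d : ℝ} (hcd : c ≤ d)
    (hf : IntervalIntegrable f volume c d) (hg : IntervalIntegrable g volume c d)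
    (h : ∀ t ∈ Set.Icc c d, f t ≤ g t) : (∫ t in c..d, f t) ≤ ∫ t in c..d, g t := by
  have h0 := Lp_integral_nonneg' hcd (hg.sub hf) (fun t ht => sub_nonneg.2 (h t ht))
  rw [intervalIntegral.integral_sub hg hf] at h0
  exact sub_nonneg.1 h0

end Helpers

/-- Commutative version of Lemma 3.2: for a strongly continuous semigroup of positive
linear contractions on `Lᵖ`, with `β_T x = (1/T)∫₀^T α_t x dt`,
`-(1/b)∫₀^a α_s x ds ≤ β_a(β_b x) - β_b x ≤ (1/b)∫_b^{b+a} α_s x ds` for `x ≥ 0`. -/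
theorem local_ergodic_sandwich
    {S : Type*} [MeasurableSpace S] (m : Measure S) [SigmaFinite m]
    (p : ℝ≥0∞) [Fact (1 ≤ p)] (hp' : p ≠ ∞)
    (α : ℝ → (Lp ℝ p m →L[ℝ] Lp ℝ p m))
    (hsemigroup : ∀ t s : ℝ, 0 ≤ t → 0 ≤ s → ∀ x, α t (α s x) = α (t + s) x)
    (hid : α 0 = ContinuousLinearMap.id ℝ (Lp ℝ p m))
    (hpos : ∀ t : ℝ, 0 ≤ t → ∀ x : Lp ℝ p m, 0 ≤ x → 0 ≤ α t x)
    (hcontr : ∀ t : ℝ, 0 ≤ t → ∀ x : Lp ℝ p m, ‖α t x‖ ≤ ‖x‖)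
    (hcont : ∀ x : Lp ℝ p m, Continuous fun t => α t x)
    (β : ℝ → Lp ℝ p m → Lp ℝ p m)
    (hβ : ∀ T : ℝ, 0 < T → ∀ x, β T x = T⁻¹ • ∫ t in (0:ℝ)..T, α t x)
    (x : Lp ℝ p m) (hx : 0 ≤ x) (a b : ℝ) (ha : 0 < a) (hb : 0 < b) :
    -(b⁻¹ • ∫ s in (0:ℝ)..a, α s x) ≤ β a (β b x) - β b x ∧
      β a (β b x) - β b x ≤ b⁻¹ • ∫ s in b..(b + a), α s x := by
  have hF : ∀ c d : ℝ, IntervalIntegrable (fun t => α t x) volume c d :=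
    fun c d => (hcont x).intervalIntegrable c d
  set I : ℝ → ℝ → Lp ℝ p m := fun c d => ∫ t in c..d, α t x with hI
  have hIadd : ∀ c d e : ℝ, I c d + I d e = I c e := fun c d e =>
    intervalIntegral.integral_add_adjacent_intervals (hF c d) (hF d e)
  have hInn : ∀ c d : ℝ, 0 ≤ c → c ≤ d → 0 ≤ I c d := fun c d hc hcd =>
    Lp_integral_nonneg' hcd (hF c d) (fun t ht => hpos t (hc.trans ht.1) x hx)
  have key : ∀ s : ℝ, 0 ≤ s → α s (β b x) = b⁻¹ • I s (s + b) := by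
    intro s hs
    rw [hβ b hb x, _root_.map_smul]
    congr 1
    rw [← ContinuousLinearMap.intervalIntegral_comp_comm (α s) (hF 0 b)]
    have hcongr : Set.EqOn (fun t => α s (α t x)) (fun t => α (s + t) x) (Set.uIcc 0 b) := by
      intro t ht
      rw [Set.uIcc_of_le hb.le] at ht
      exact hsemigroup s t hs ht.1 x
    rw [intervalIntegral.integral_congr hcongr,
      intervalIntegral.integral_comp_add_left (fun u => α u x) s]
    simp only [hI, add_zero]
  have hgint : IntervalIntegrable (fun s => α s (β b x)) volume 0 a :=
    (hcont (β b x)).intervalIntegrable 0 a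
  have hconst : IntervalIntegrable (fun _ : ℝ => β b x) volume 0 a := intervalIntegrable_const
  have hsubint : IntervalIntegrable (fun s => α s (β b x) - β b x) volume 0 a :=
    hgint.sub hconst
  have hD : β a (β b x) - β b x =
      a⁻¹ • ∫ s in (0:ℝ)..a, (α s (β b x) - β b x) := by
    rw [intervalIntegral.integral_sub hgint hconst, intervalIntegral.integral_const, sub_zero,
      hβ a ha (β b x), smul_sub, smul_smul, inv_mul_cancel₀ ha.ne', one_smul]
  have hbound : ∀ s ∈ Set.Icc (0:ℝ) a,
      -(b⁻¹ • I 0 a) ≤ α s (β b x) - β b x ∧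
        α s (β b x) - β b x ≤ b⁻¹ • I b (b + a) := by
    intro s hs
    obtain ⟨hs0, hsa⟩ := hs
    have hβb : β b x = b⁻¹ • I 0 b := hβ b hb x
    have h1 : α s (β b x) - β b x = b⁻¹ • (I b (s + b) - I 0 s) := by
      rw [key s hs0, hβb, ← smul_sub]
      congr 1
      have e1 : I s (s + b) = I 0 (s + b) - I 0 s := eq_sub_of_add_eq' (hIadd 0 s (s + b))
      have e2 : I b (s + b) = I 0 (s + b) - I 0 b := eq_sub_of_add_eq' (hIadd 0 b (s + b))
      rw [e1, e2]; abel
    have hsab : I s a = I 0 a - I 0 s := by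
      have := hIadd 0 s a
      rw [← this]; abel
    constructor
    · rw [h1, ← sub_nonneg, sub_neg_eq_add, ← smul_add]
      apply Lp_smul_nonneg' (inv_nonneg.2 hb.le)
      have : I b (s + b) - I 0 s + I 0 a = I b (s + b) + I s a := by
        rw [hsab]; abel
      rw [this]
      exact add_nonneg (hInn b (s + b) hb.le (by linarith))
        (hInn s a hs0 hsa)
    · rw [h1, ← sub_nonneg, ← smul_sub]
      apply Lp_smul_nonneg' (inv_nonneg.2 hb.le)
      have e3 : I (s + b) (b + a) = I b (b + a) - I b (s + b) :=
        eq_sub_of_add_eq' (hIadd b (s + b) (b + a))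
      have : I b (b + a) - (I b (s + b) - I 0 s) = I (s + b) (b + a) + I 0 s := by
        rw [e3]; abel
      rw [this]
      exact add_nonneg (hInn (s + b) (b + a) (by linarith) (by linarith))
        (hInn 0 s le_rfl hs0)
  have hLint : IntervalIntegrable (fun _ : ℝ => -(b⁻¹ • I 0 a)) volume 0 a :=
    intervalIntegrable_const
  have hUint : IntervalIntegrable (fun _ : ℝ => b⁻¹ • I b (b + a)) volume 0 a :=
    intervalIntegrable_const
  have hlow : a • -(b⁻¹ • I 0 a) ≤ ∫ s in (0:ℝ)..a, (α s (β b x) - β b x) := by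
    have := Lp_integral_mono' ha.le hLint hsubint (fun t ht => (hbound t ht).1)
    rwa [intervalIntegral.integral_const, sub_zero] at this
  have hup : (∫ s in (0:ℝ)..a, (α s (β b x) - β b x)) ≤ a • (b⁻¹ • I b (b + a)) := by
    have := Lp_integral_mono' ha.le hsubint hUint (fun t ht => (hbound t ht).2)
    rwa [intervalIntegral.integral_const, sub_zero] at this
  constructor
  · have := Lp_smul_le_smul' (inv_nonneg.2 ha.le) hlow
    rw [smul_smul, inv_mul_cancel₀ ha.ne', one_smul, ← hD] at this
    simpa only [hI] using this
  · have := Lp_smul_le_smul' (inv_nonneg.2 ha.le) hup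
    rw [smul_smul, inv_mul_cancel₀ ha.ne', one_smul, ← hD] at this
    simpa only [hI] using this
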